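/- The image φ(A) ⊆ B is closed under the Wick–Voros star product: for all f, g ∈ A there exists h ∈ A with φ(f) ⋆_WV φ(g) = φ(h). That is, the subalgebra of B generated by the elements Σ_{i=1}^d w^i z^i and w^1,…,w^d is a noncommutative subalgebra of (B, ⋆_WV). -/

import Mathlib

open MvPolynomial

/-- Iterated partial derivative along a list of variable indices. -/
noncomputable def pdList {σ : Type*} [DecidableEq σ] (l : List σ)
    (f : MvPolynomial σ ℝ) : MvPolynomial σ ℝ :=
  l.foldr (fun i h => pderiv i h) f

/-- The Wick–Voros star product on `B = ℝ[z^1,…,z^d,w^1,…,w^d]`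
(`Sum.inl i` indexing `z^i`, `Sum.inr i` indexing `w^i`):
`f ⋆_WV g = Σ_{n≥0} (θⁿ/n!) Σ_{i_1,…,i_n} (∂_{z^{i_1}}⋯∂_{z^{i_n}} f)·(∂_{w^{i_1}}⋯∂_{w^{i_n}} g)`;
on polynomials only finitely many terms are nonzero, so the sum is a `finsum`. -/
noncomputable def wvstar (d : ℕ) (θ : ℝ)
    (f g : MvPolynomial (Fin d ⊕ Fin d) ℝ) : MvPolynomial (Fin d ⊕ Fin d) ℝ :=
  ∑ᶠ n : ℕ, (θ ^ n / (n.factorial : ℝ)) •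
    ∑ i : Fin n → Fin d,
      pdList (List.ofFn fun j => Sum.inl (i j)) f *
      pdList (List.ofFn fun j => Sum.inr (i j)) g

/-- The algebra homomorphism `φ : ℝ[x⁰,…,x^d] → ℝ[z^1,…,z^d,w^1,…,w^d]` with
`φ(x⁰) = Σ_i w^i z^i` and `φ(x^k) = w^k` for `k = 1,…,d`. -/
noncomputable def phiR (d : ℕ) :
    MvPolynomial (Fin (d + 1)) ℝ →ₐ[ℝ] MvPolynomial (Fin d ⊕ Fin d) ℝ :=
  aeval (Fin.cases (∑ i : Fin d, X (Sum.inr i) * X (Sum.inl i))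
    (fun k : Fin d => X (Sum.inr k)))

namespace WVAux

section pdListLemmas

variable {σ : Type*} [DecidableEq σ]

lemma pdList_nil (f : MvPolynomial σ ℝ) : pdList ([] : List σ) f = f := rfl

lemma pdList_cons (a : σ) (l : List σ) (f : MvPolynomial σ ℝ) :
    pdList (a :: l) f = pderiv a (pdList l f) := rfl

lemma pdList_singleton (a : σ) (f : MvPolynomial σ ℝ) :
    pdList [a] f = pderiv a f := rfl

lemma pdList_append (l₁ l₂ : List σ) (f : MvPolynomial σ ℝ) :
    pdList (l₁ ++ l₂) f = pdList l₁ (pdList l₂ f) := by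
  simp [pdList, List.foldr_append]

lemma pdList_zero (l : List σ) : pdList l (0 : MvPolynomial σ ℝ) = 0 := by
  induction l with
  | nil => rfl
  | cons a l ih => rw [pdList_cons, ih, map_zero]

lemma pdList_add (l : List σ) (f g : MvPolynomial σ ℝ) :
    pdList l (f + g) = pdList l f + pdList l g := by
  induction l with
  | nil => rfl
  | cons a l ih => rw [pdList_cons, pdList_cons, pdList_cons, ih, map_add]

lemma pdList_X_mul (l : List σ) (a : σ) (h : a ∉ l) (f : MvPolynomial σ ℝ) :
    pdList l (X a * f) = X a * pdList l f := by
  induction l with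
  | nil => rfl
  | cons b l ih =>
    have hab : a ≠ b := fun e => h (e ▸ (List.mem_cons_self : b ∈ b :: l))
    rw [pdList_cons, pdList_cons, ih (fun hm => h (List.mem_cons_of_mem _ hm)),
      pderiv_mul, pderiv_X_of_ne hab, zero_mul, zero_add]

lemma pderiv_comm' (i j : σ) (f : MvPolynomial σ ℝ) :
    pderiv i (pderiv j f) = pderiv j (pderiv i f) := by
  induction f using MvPolynomial.induction_on' with
  | add p q hp hq => simp [hp, hq]
  | monomial s a =>
    rcases eq_or_ne i j with rfl | hij
    · rfl
    · simp only [pderiv_monomial]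
      have h1 : ((s - Finsupp.single j 1 : σ →₀ ℕ)) i = s i := by
        rw [Finsupp.tsub_apply, Finsupp.single_eq_of_ne hij, Nat.sub_zero]
      have h2 : ((s - Finsupp.single i 1 : σ →₀ ℕ)) j = s j := by
        rw [Finsupp.tsub_apply, Finsupp.single_eq_of_ne hij.symm, Nat.sub_zero]
      have he : s - Finsupp.single j 1 - Finsupp.single i 1
          = s - Finsupp.single i 1 - Finsupp.single j 1 := by
        ext k
        simp only [Finsupp.tsub_apply]
        omega
      rw [h1, h2, he]
      ring_nf

/-- total degree of the partial derivative -/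
lemma totalDegree_pderiv_le' (i : σ) (g : MvPolynomial σ ℝ) :
    (pderiv i g).totalDegree ≤ g.totalDegree - 1 := by
  conv_lhs => rw [g.as_sum, map_sum]
  refine (totalDegree_finset_sum _ _).trans ?_
  refine Finset.sup_le fun s hs => ?_
  rw [pderiv_monomial]
  by_cases hsi : s i = 0
  · simp [hsi]
  · refine (totalDegree_monomial_le _ _).trans ?_
    have hdecomp : s = (s - Finsupp.single i 1) + Finsupp.single i 1 := by
      ext k
      simp only [Finsupp.add_apply, Finsupp.tsub_apply, Finsupp.single_apply]
      split_ifs with h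
      · subst h; omega
      · omega
    have hsum : s.sum (fun _ e => e)
        = (s - Finsupp.single i 1).sum (fun _ e => e) + 1 := by
      conv_lhs => rw [hdecomp]
      rw [Finsupp.sum_add_index' (fun _ => rfl) (fun _ _ _ => rfl)]
      rw [Finsupp.sum_single_index rfl]
    have hle : s.sum (fun _ e => e) ≤ g.totalDegree := le_totalDegree hs
    have hid : ((s - Finsupp.single i 1 : σ →₀ ℕ)).sum (fun _ => id)
        = ((s - Finsupp.single i 1 : σ →₀ ℕ)).sum (fun _ e => e) := rfl
    rw [hid]
    omega

lemma pderiv_eq_zero_of_totalDegree_eq_zero (i : σ) {g : MvPolynomial σ ℝ}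
    (h : g.totalDegree = 0) : pderiv i g = 0 := by
  conv_lhs => rw [g.as_sum, map_sum]
  refine Finset.sum_eq_zero fun s hs => ?_
  have hz : s i = 0 := (totalDegree_eq_zero_iff σ g).1 h s hs i
  simp [pderiv_monomial, hz]

end pdListLemmas

/-! ### The homogeneous pieces `T d n` of the star product -/

noncomputable def T (d n : ℕ) (f g : MvPolynomial (Fin d ⊕ Fin d) ℝ) :
    MvPolynomial (Fin d ⊕ Fin d) ℝ :=
  ∑ i : Fin n → Fin d,
    pdList (List.ofFn fun j => Sum.inl (i j)) f *
    pdList (List.ofFn fun j => Sum.inr (i j)) g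

lemma wvstar_eq (d : ℕ) (θ : ℝ) (f g : MvPolynomial (Fin d ⊕ Fin d) ℝ) :
    wvstar d θ f g = ∑ᶠ n : ℕ, (θ ^ n / (n.factorial : ℝ)) • T d n f g := rfl

variable {d : ℕ}

lemma T_zero (f g : MvPolynomial (Fin d ⊕ Fin d) ℝ) : T d 0 f g = f * g := by
  simp [T, pdList]

lemma ofFn_snoc_inl (n : ℕ) (i : Fin n → Fin d) (a : Fin d) :
    (List.ofFn fun j : Fin (n+1) =>
        (Sum.inl (Fin.snoc (α := fun _ => Fin d) i a j) : Fin d ⊕ Fin d))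
      = (List.ofFn fun j => Sum.inl (i j)) ++ [Sum.inl a] := by
  rw [List.ofFn_succ']
  simp [List.concat_eq_append]

lemma ofFn_snoc_inr (n : ℕ) (i : Fin n → Fin d) (a : Fin d) :
    (List.ofFn fun j : Fin (n+1) =>
        (Sum.inr (Fin.snoc (α := fun _ => Fin d) i a j) : Fin d ⊕ Fin d))
      = (List.ofFn fun j => Sum.inr (i j)) ++ [Sum.inr a] := by
  rw [List.ofFn_succ']
  simp [List.concat_eq_append]

lemma T_succ (n : ℕ) (f g : MvPolynomial (Fin d ⊕ Fin d) ℝ) :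
    T d (n+1) f g
      = ∑ a : Fin d, T d n (pderiv (Sum.inl a) f) (pderiv (Sum.inr a) g) := by
  rw [T, ← Equiv.sum_comp (Fin.snocEquiv (fun _ => Fin d))]
  rw [Fintype.sum_prod_type]
  refine Finset.sum_congr rfl fun a _ => ?_
  rw [T]
  refine Finset.sum_congr rfl fun i _ => ?_
  simp only [Fin.snocEquiv_apply]
  rw [ofFn_snoc_inl, ofFn_snoc_inr, pdList_append, pdList_append, pdList_singleton,
    pdList_singleton]

lemma T_zero_right (n : ℕ) (f : MvPolynomial (Fin d ⊕ Fin d) ℝ) :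
    T d n f 0 = 0 := by
  rw [T]
  refine Finset.sum_eq_zero fun i _ => ?_
  rw [pdList_zero, mul_zero]

lemma T_add_right (n : ℕ) (f g₁ g₂ : MvPolynomial (Fin d ⊕ Fin d) ℝ) :
    T d n f (g₁ + g₂) = T d n f g₁ + T d n f g₂ := by
  rw [T, T, T, ← Finset.sum_add_distrib]
  refine Finset.sum_congr rfl fun i _ => ?_
  rw [pdList_add, mul_add]

lemma T_X_inl_right (n : ℕ) (a : Fin d) (f g : MvPolynomial (Fin d ⊕ Fin d) ℝ) :
    T d n f (X (Sum.inl a) * g) = X (Sum.inl a) * T d n f g := by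
  rw [T, T, Finset.mul_sum]
  refine Finset.sum_congr rfl fun i _ => ?_
  rw [pdList_X_mul _ _ (by simp [List.mem_ofFn]), mul_left_comm]

lemma T_X_inr_left (n : ℕ) (k : Fin d) (f g : MvPolynomial (Fin d ⊕ Fin d) ℝ) :
    T d n (X (Sum.inr k) * f) g = X (Sum.inr k) * T d n f g := by
  rw [T, T, Finset.mul_sum]
  refine Finset.sum_congr rfl fun i _ => ?_
  rw [pdList_X_mul _ _ (by simp [List.mem_ofFn]), mul_assoc]

lemma T_eq_zero_of_lt (n : ℕ) (f g : MvPolynomial (Fin d ⊕ Fin d) ℝ)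
    (h : g.totalDegree < n) : T d n f g = 0 := by
  induction n generalizing f g with
  | zero => omega
  | succ n ih =>
    rw [T_succ]
    refine Finset.sum_eq_zero fun a _ => ?_
    by_cases hz : pderiv (Sum.inr a) g = 0
    · rw [hz, T_zero_right]
    · have hdeg0 : g.totalDegree ≠ 0 := fun h0 =>
        hz (pderiv_eq_zero_of_totalDegree_eq_zero _ h0)
      have hle := totalDegree_pderiv_le' (Sum.inr a) g
      exact ih _ _ (by omega)

/-! ### the Leibniz-type recursions -/

noncomputable def sP (d : ℕ) : MvPolynomial (Fin d ⊕ Fin d) ℝ :=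
  ∑ i : Fin d, X (Sum.inr i) * X (Sum.inl i)

lemma sP_def : sP d = ∑ i : Fin d, X (Sum.inr i) * X (Sum.inl i) := rfl

lemma pderiv_inr_sP (a : Fin d) : pderiv (Sum.inr a) (sP d) = X (Sum.inl a) := by
  rw [sP, map_sum]
  rw [Finset.sum_eq_single a]
  · rw [pderiv_mul, pderiv_X_self, pderiv_X_of_ne (by simp), mul_zero, add_zero, one_mul]
  · intro b _ hb
    rw [pderiv_mul, pderiv_X_of_ne (by simp [hb]), pderiv_X_of_ne (by simp), zero_mul,
      mul_zero, add_zero]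
  · simp

lemma pderiv_inl_sP (a : Fin d) : pderiv (Sum.inl a) (sP d) = X (Sum.inr a) := by
  rw [sP, map_sum]
  rw [Finset.sum_eq_single a]
  · rw [pderiv_mul, pderiv_X_self, pderiv_X_of_ne (by simp), zero_mul, zero_add, mul_one]
  · intro b _ hb
    rw [pderiv_mul, pderiv_X_of_ne (by simp), pderiv_X_of_ne (by simp [hb]), zero_mul,
      mul_zero, add_zero]
  · simp

lemma T_w (k : Fin d) : ∀ (n : ℕ) (f g : MvPolynomial (Fin d ⊕ Fin d) ℝ),
    T d n f (X (Sum.inr k) * g)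
      = X (Sum.inr k) * T d n f g + n • T d (n-1) (pderiv (Sum.inl k) f) g := by
  intro n
  induction n with
  | zero =>
    intro f g
    simp only [T_zero, zero_smul, add_zero, Nat.zero_sub]
    ring
  | succ n ih =>
    intro f g
    rw [T_succ]
    have hterm : ∀ a : Fin d,
        T d n (pderiv (Sum.inl a) f) (pderiv (Sum.inr a) (X (Sum.inr k) * g))
          = (if k = a then T d n (pderiv (Sum.inl a) f) g else 0)
            + (X (Sum.inr k) * T d n (pderiv (Sum.inl a) f) (pderiv (Sum.inr a) g)
              + n • T d (n-1) (pderiv (Sum.inl k) (pderiv (Sum.inl a) f))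
                  (pderiv (Sum.inr a) g)) := by
      intro a
      have hX : pderiv (Sum.inr a) (X (Sum.inr k) * g)
          = (if k = a then g else 0) + X (Sum.inr k) * pderiv (Sum.inr a) g := by
        rw [pderiv_mul]
        congr 1
        rcases eq_or_ne k a with rfl | hk
        · simp
        · rw [pderiv_X_of_ne (by simp [hk]), zero_mul, if_neg hk]
      rw [hX, T_add_right, ih]
      congr 1
      rcases eq_or_ne k a with rfl | hk
      · simp
      · simp [hk, T_zero_right]
    rw [Finset.sum_congr rfl (fun a _ => hterm a)]
    rw [Finset.sum_add_distrib, Finset.sum_add_distrib]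
    rw [Finset.sum_ite_eq Finset.univ k (fun a => T d n (pderiv (Sum.inl a) f) g)]
    simp only [Finset.mem_univ, if_true]
    rw [← Finset.mul_sum, ← T_succ]
    have hcomm : ∀ a : Fin d,
        (n • T d (n-1) (pderiv (Sum.inl k) (pderiv (Sum.inl a) f)) (pderiv (Sum.inr a) g))
          = n • T d (n-1) (pderiv (Sum.inl a) (pderiv (Sum.inl k) f)) (pderiv (Sum.inr a) g) := by
      intro a; rw [pderiv_comm']
    rw [Finset.sum_congr rfl (fun a _ => hcomm a), ← Finset.smul_sum]
    rcases Nat.eq_zero_or_pos n with rfl | hn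
    · simp only [zero_smul, smul_zero, add_zero, zero_add, Nat.add_sub_cancel, one_smul]
      abel
    · have hns : n - 1 + 1 = n := by omega
      have hsum : (∑ a : Fin d, T d (n-1) (pderiv (Sum.inl a) (pderiv (Sum.inl k) f))
          (pderiv (Sum.inr a) g)) = T d n (pderiv (Sum.inl k) f) g := by
        rw [← T_succ, hns]
      rw [hsum, Nat.add_sub_cancel, succ_nsmul]
      abel

lemma T_s : ∀ (n : ℕ) (f g : MvPolynomial (Fin d ⊕ Fin d) ℝ),
    T d n f (sP d * g)
      = sP d * T d n f g
        + n • ∑ a : Fin d, X (Sum.inl a) * T d (n-1) (pderiv (Sum.inl a) f) g := by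
  intro n
  induction n with
  | zero =>
    intro f g
    simp only [T_zero, zero_smul, add_zero, Nat.zero_sub]
    ring
  | succ n ih =>
    intro f g
    rw [T_succ]
    have hterm : ∀ a : Fin d,
        T d n (pderiv (Sum.inl a) f) (pderiv (Sum.inr a) (sP d * g))
          = X (Sum.inl a) * T d n (pderiv (Sum.inl a) f) g
            + (sP d * T d n (pderiv (Sum.inl a) f) (pderiv (Sum.inr a) g)
              + n • ∑ b : Fin d, X (Sum.inl b)
                  * T d (n-1) (pderiv (Sum.inl b) (pderiv (Sum.inl a) f))
                      (pderiv (Sum.inr a) g)) := by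
      intro a
      have hX : pderiv (Sum.inr a) (sP d * g)
          = X (Sum.inl a) * g + sP d * pderiv (Sum.inr a) g := by
        rw [pderiv_mul, pderiv_inr_sP]
      rw [hX, T_add_right, T_X_inl_right, ih]
    rw [Finset.sum_congr rfl (fun a _ => hterm a)]
    rw [Finset.sum_add_distrib, Finset.sum_add_distrib]
    rw [← Finset.mul_sum, ← T_succ]
    have hswap : (∑ a : Fin d, n • ∑ b : Fin d, X (Sum.inl b)
          * T d (n-1) (pderiv (Sum.inl b) (pderiv (Sum.inl a) f)) (pderiv (Sum.inr a) g))
        = n • ∑ b : Fin d, X (Sum.inl b) * ∑ a : Fin d,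
            T d (n-1) (pderiv (Sum.inl a) (pderiv (Sum.inl b) f)) (pderiv (Sum.inr a) g) := by
      rw [← Finset.smul_sum]
      congr 1
      rw [Finset.sum_comm]
      refine Finset.sum_congr rfl fun b _ => ?_
      rw [Finset.mul_sum]
      refine Finset.sum_congr rfl fun a _ => ?_
      rw [pderiv_comm']
    rw [hswap]
    rcases Nat.eq_zero_or_pos n with rfl | hn
    · simp only [zero_smul, smul_zero, add_zero, zero_add, Nat.add_sub_cancel, one_smul]
      abel
    · have hns : n - 1 + 1 = n := by omega
      have hsum : (∑ b : Fin d, X (Sum.inl b) * ∑ a : Fin d,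
          T d (n-1) (pderiv (Sum.inl a) (pderiv (Sum.inl b) f)) (pderiv (Sum.inr a) g))
            = ∑ b : Fin d, X (Sum.inl b) * T d n (pderiv (Sum.inl b) f) g := by
        refine Finset.sum_congr rfl fun b _ => ?_
        rw [← T_succ, hns]
      rw [hsum, Nat.add_sub_cancel, succ_nsmul]
      abel

/-! ### finite-sum form of `wvstar` -/

lemma wvstar_eq_sum (θ : ℝ) (f g : MvPolynomial (Fin d ⊕ Fin d) ℝ) {N : ℕ}
    (h : g.totalDegree < N) :
    wvstar d θ f g = ∑ n ∈ Finset.range N, (θ ^ n / (n.factorial : ℝ)) • T d n f g := by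
  rw [wvstar_eq]
  refine finsum_eq_finset_sum_of_support_subset _ fun n hn => ?_
  simp only [Function.mem_support, ne_eq] at hn
  by_contra hmem
  simp only [Finset.coe_range, Set.mem_Iio, not_lt] at hmem
  exact hn (by rw [T_eq_zero_of_lt _ _ _ (by omega), smul_zero])

lemma wvstar_add_right (θ : ℝ) (f g₁ g₂ : MvPolynomial (Fin d ⊕ Fin d) ℝ) :
    wvstar d θ f (g₁ + g₂) = wvstar d θ f g₁ + wvstar d θ f g₂ := by
  set N := max g₁.totalDegree g₂.totalDegree + 1 with hN
  have h1 : g₁.totalDegree < N := by omega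
  have h2 : g₂.totalDegree < N := by omega
  have h12 : (g₁ + g₂).totalDegree < N :=
    lt_of_le_of_lt (totalDegree_add g₁ g₂) (by omega)
  rw [wvstar_eq_sum θ f _ h12, wvstar_eq_sum θ f _ h1, wvstar_eq_sum θ f _ h2,
    ← Finset.sum_add_distrib]
  refine Finset.sum_congr rfl fun n _ => ?_
  rw [T_add_right, smul_add]

lemma wvstar_C_right (θ : ℝ) (c : ℝ) (f : MvPolynomial (Fin d ⊕ Fin d) ℝ) :
    wvstar d θ f (C c) = C c * f := by
  rw [wvstar_eq_sum θ f (C c) (N := 1) (by simp), Finset.sum_range_one]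
  simp [T_zero, mul_comm]

lemma wvstar_X_inr_left (θ : ℝ) (k : Fin d) (f g : MvPolynomial (Fin d ⊕ Fin d) ℝ) :
    wvstar d θ (X (Sum.inr k) * f) g = X (Sum.inr k) * wvstar d θ f g := by
  rw [wvstar_eq_sum θ _ g (N := g.totalDegree + 1) (by omega),
    wvstar_eq_sum θ f g (N := g.totalDegree + 1) (by omega), Finset.mul_sum]
  refine Finset.sum_congr rfl fun n _ => ?_
  rw [T_X_inr_left, mul_smul_comm]

lemma coeff_shift (θ : ℝ) (m : ℕ) :
    (θ ^ (m+1) / (((m+1).factorial : ℕ) : ℝ)) * (((m+1 : ℕ) : ℕ) : ℝ)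
      = θ * (θ ^ m / (m.factorial : ℝ)) := by
  have h2 : (m.factorial : ℝ) ≠ 0 := Nat.cast_ne_zero.2 m.factorial_ne_zero
  have h3 : ((m : ℝ) + 1) ≠ 0 := by positivity
  rw [Nat.factorial_succ, pow_succ]
  push_cast
  field_simp

lemma wvstar_w (θ : ℝ) (k : Fin d) (f g : MvPolynomial (Fin d ⊕ Fin d) ℝ) :
    wvstar d θ f (X (Sum.inr k) * g)
      = X (Sum.inr k) * wvstar d θ f g
        + θ • wvstar d θ (pderiv (Sum.inl k) f) g := by
  set M := (X (Sum.inr k) * g).totalDegree + g.totalDegree + 1 with hM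
  have hg : g.totalDegree < M := by omega
  have hg' : g.totalDegree < M + 1 := by omega
  have hkg : (X (Sum.inr k) * g).totalDegree < M + 1 := by omega
  rw [wvstar_eq_sum θ f _ hkg, wvstar_eq_sum θ f g hg']
  have hterm : ∀ n : ℕ,
      (θ ^ n / (n.factorial : ℝ)) • T d n f (X (Sum.inr k) * g)
        = X (Sum.inr k) * ((θ ^ n / (n.factorial : ℝ)) • T d n f g)
          + ((θ ^ n / (n.factorial : ℝ)) * (n : ℝ)) • T d (n-1) (pderiv (Sum.inl k) f) g := by
    intro n
    rw [T_w, smul_add, ← mul_smul_comm, ← Nat.cast_smul_eq_nsmul ℝ n, smul_smul]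
  rw [Finset.sum_congr rfl (fun n _ => hterm n), Finset.sum_add_distrib, ← Finset.mul_sum]
  congr 1
  rw [Finset.sum_range_succ']
  simp only [Nat.cast_zero, mul_zero, zero_smul, add_zero]
  rw [wvstar_eq_sum θ _ g hg, Finset.smul_sum]
  refine Finset.sum_congr rfl fun m _ => ?_
  rw [Nat.add_sub_cancel, coeff_shift, mul_smul]

lemma wvstar_s (θ : ℝ) (f g : MvPolynomial (Fin d ⊕ Fin d) ℝ) :
    wvstar d θ f (sP d * g)
      = sP d * wvstar d θ f g
        + θ • ∑ a : Fin d, X (Sum.inl a) * wvstar d θ (pderiv (Sum.inl a) f) g := by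
  set M := (sP d * g).totalDegree + g.totalDegree + 1 with hM
  have hg : g.totalDegree < M := by omega
  have hg' : g.totalDegree < M + 1 := by omega
  have hsg : (sP d * g).totalDegree < M + 1 := by omega
  rw [wvstar_eq_sum θ f _ hsg, wvstar_eq_sum θ f g hg']
  have hterm : ∀ n : ℕ,
      (θ ^ n / (n.factorial : ℝ)) • T d n f (sP d * g)
        = sP d * ((θ ^ n / (n.factorial : ℝ)) • T d n f g)
          + ((θ ^ n / (n.factorial : ℝ)) * (n : ℝ)) •
              ∑ a : Fin d, X (Sum.inl a) * T d (n-1) (pderiv (Sum.inl a) f) g := by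
    intro n
    rw [T_s, smul_add, ← mul_smul_comm, ← Nat.cast_smul_eq_nsmul ℝ n, smul_smul]
  rw [Finset.sum_congr rfl (fun n _ => hterm n), Finset.sum_add_distrib, ← Finset.mul_sum]
  congr 1
  rw [Finset.sum_range_succ']
  simp only [Nat.cast_zero, mul_zero, zero_smul, add_zero]
  have hrhs : (∑ a : Fin d, X (Sum.inl a) * wvstar d θ (pderiv (Sum.inl a) f) g)
      = ∑ m ∈ Finset.range M, ∑ a : Fin d, X (Sum.inl a) *
          ((θ ^ m / (m.factorial : ℝ)) • T d m (pderiv (Sum.inl a) f) g) := by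
    rw [Finset.sum_comm]
    refine Finset.sum_congr rfl fun a _ => ?_
    rw [wvstar_eq_sum θ _ g hg, Finset.mul_sum]
  rw [hrhs, Finset.smul_sum]
  refine Finset.sum_congr rfl fun m _ => ?_
  rw [Nat.add_sub_cancel, coeff_shift, mul_smul, Finset.smul_sum]
  congr 1
  refine Finset.sum_congr rfl fun a _ => ?_
  rw [mul_smul_comm]

/-! ### `phiR` and derivatives -/

lemma phiR_C (c : ℝ) : phiR d (C c) = C c := by
  simp [phiR]

lemma phiR_X_zero : phiR d (X 0) = sP d := by
  rw [phiR, aeval_X, sP]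
  exact Fin.cases_zero

lemma phiR_X_succ (k : Fin d) : phiR d (X k.succ) = X (Sum.inr k) := by
  rw [phiR, aeval_X]
  exact Fin.cases_succ _

lemma pderiv_phiR (a : Fin d) (f : MvPolynomial (Fin (d+1)) ℝ) :
    pderiv (Sum.inl a) (phiR d f) = X (Sum.inr a) * phiR d (pderiv 0 f) := by
  induction f using MvPolynomial.induction_on with
  | C c =>
    rw [phiR_C]
    simp [pderiv_C]
  | add p q hp hq =>
    rw [map_add, map_add, hp, hq, map_add, map_add, mul_add]
  | mul_X p μ hp =>
    rw [map_mul, pderiv_mul, hp, pderiv_mul]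
    induction μ using Fin.cases with
    | zero =>
      rw [phiR_X_zero, pderiv_inl_sP, pderiv_X_self, mul_one, map_add, map_mul,
        phiR_X_zero]
      ring
    | succ k =>
      rw [phiR_X_succ, pderiv_X_of_ne (by simp), pderiv_X_of_ne (Fin.succ_ne_zero k)]
      rw [mul_zero, mul_zero, add_zero, add_zero, map_mul, phiR_X_succ]
      ring

end WVAux

open WVAux in
/-- the image `φ(A) ⊆ B` is closed under the Wick–Voros star product:
for all `f, g ∈ A` there is `h ∈ A` with `φ(f) ⋆_WV φ(g) = φ(h)`. -/
theorem phi_image_closed_under_wvstar (d : ℕ) (hd : 1 ≤ d) (θ : ℝ)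
    (f g : MvPolynomial (Fin (d + 1)) ℝ) :
    ∃ h : MvPolynomial (Fin (d + 1)) ℝ,
      wvstar d θ (phiR d f) (phiR d g) = phiR d h := by
  clear hd
  induction g using MvPolynomial.induction_on generalizing f with
  | C c =>
    refine ⟨C c * f, ?_⟩
    rw [phiR_C, wvstar_C_right, map_mul, phiR_C]
  | add p q ihp ihq =>
    obtain ⟨h₁, e₁⟩ := ihp f
    obtain ⟨h₂, e₂⟩ := ihq f
    exact ⟨h₁ + h₂, by rw [map_add, wvstar_add_right, e₁, e₂, map_add]⟩
  | mul_X p μ ih =>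
    obtain ⟨h₁, e₁⟩ := ih f
    obtain ⟨h₂, e₂⟩ := ih (pderiv 0 f)
    refine ⟨X μ * (h₁ + θ • h₂), ?_⟩
    rw [map_mul, map_mul, map_add]
    have hsmul : phiR d (θ • h₂) = θ • phiR d h₂ := map_smul _ _ _
    rw [hsmul, mul_comm (phiR d p) (phiR d (X μ))]
    induction μ using Fin.cases with
    | zero =>
      rw [phiR_X_zero, wvstar_s, e₁]
      have hsum : (∑ a : Fin d,
          X (Sum.inl a) * wvstar d θ (pderiv (Sum.inl a) (phiR d f)) (phiR d p))
            = sP d * wvstar d θ (phiR d (pderiv 0 f)) (phiR d p) := by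
        rw [sP_def, Finset.sum_mul]
        refine Finset.sum_congr rfl fun a _ => ?_
        rw [pderiv_phiR, wvstar_X_inr_left]
        ring
      rw [hsum, e₂, mul_add, mul_smul_comm]
    | succ k =>
      rw [phiR_X_succ, wvstar_w, e₁, pderiv_phiR, wvstar_X_inr_left, e₂,
        mul_add, mul_smul_comm]
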